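/- For 0 < γ < 1 and fixed λ₁ > 0, setting ζ = λ₁^{1/(1-γ)} γ^{γ/(1-γ)} (1-γ), the minimum over μ ≥ 0 of μ^{1-1/γ}·t + ζμ equals λ₁ t^{γ} for every t ≥ 0, and the minimizer is μ* = ((1-γ)/(γζ))^{γ} t^{γ} when t > 0. -/
import Mathlib


open Real

lemma eq_of_log_eq' {x y : ℝ} (hx : 0 < x) (hy : 0 < y)
    (h : Real.log x = Real.log y) : x = y := by
  rw [← Real.exp_log hx, ← Real.exp_log hy, h]

/-- Variational representation of the bridge penalty: for 0 < γ < 1, λ₁ > 0 and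
ζ = λ₁^{1/(1-γ)} γ^{γ/(1-γ)} (1-γ), the minimum over μ of μ^{1-1/γ} t + ζ μ equals
λ₁ t^γ, attained at μ* = ((1-γ)/(γζ))^γ t^γ for t > 0; at t = 0 (with the convention
0^{1-1/γ}·0 = 0) the minimum over μ ≥ 0 of ζμ is λ₁·0^γ = 0. -/
theorem stmt2 (γ lam₁ : ℝ) (hγ0 : 0 < γ) (hγ1 : γ < 1) (hlam : 0 < lam₁)
    (ζ : ℝ) (hζ : ζ = lam₁ ^ (1 / (1 - γ)) * γ ^ (γ / (1 - γ)) * (1 - γ)) :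
    (∀ t : ℝ, 0 < t →
      (∀ μ : ℝ, 0 < μ → lam₁ * t ^ γ ≤ μ ^ (1 - 1 / γ) * t + ζ * μ) ∧
      (((1 - γ) / (γ * ζ)) ^ γ * t ^ γ) ^ (1 - 1 / γ) * t
        + ζ * (((1 - γ) / (γ * ζ)) ^ γ * t ^ γ) = lam₁ * t ^ γ) ∧
    IsLeast ((fun μ : ℝ => ζ * μ) '' Set.Ici 0) (lam₁ * (0 : ℝ) ^ γ) := by
  have h1γ : 0 < 1 - γ := by linarith
  have hζpos : 0 < ζ := by
    rw [hζ]; positivity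
  have hlogζ : Real.log ζ
      = (1 / (1 - γ)) * Real.log lam₁ + (γ / (1 - γ)) * Real.log γ
        + Real.log (1 - γ) := by
    rw [hζ, Real.log_mul (by positivity) (by positivity),
      Real.log_mul (by positivity) (by positivity),
      Real.log_rpow hlam, Real.log_rpow hγ0]
  have hDpos : 0 < (1 - γ) / (γ * ζ) := by positivity
  constructor
  · intro t ht
    constructor
    · intro μ hμ
      have hA : 0 < μ ^ (1 - 1/γ) * t / γ := by positivity
      have hB : 0 < ζ * μ / (1 - γ) := by positivity
      have hgm := Real.geom_mean_le_arith_mean2_weighted (le_of_lt hγ0)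
        (le_of_lt h1γ) (le_of_lt hA) (le_of_lt hB) (by ring)
      have heq : (μ ^ (1 - 1/γ) * t / γ) ^ γ * (ζ * μ / (1 - γ)) ^ (1 - γ)
          = lam₁ * t ^ γ := by
        apply eq_of_log_eq' (by positivity) (by positivity)
        rw [Real.log_mul (by positivity) (by positivity),
          Real.log_rpow hA, Real.log_rpow hB,
          Real.log_div (by positivity) (by positivity),
          Real.log_div (by positivity) (by positivity),
          Real.log_mul (by positivity) (by positivity),
          Real.log_mul (by positivity) (by positivity),
          Real.log_rpow hμ, Real.log_mul (by positivity) (by positivity),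
          Real.log_rpow ht, hlogζ]
        field_simp
        ring
      have harith : γ * (μ ^ (1 - 1/γ) * t / γ) + (1 - γ) * (ζ * μ / (1 - γ))
          = μ ^ (1 - 1/γ) * t + ζ * μ := by
        field_simp
      rw [heq, harith] at hgm
      exact hgm
    · have hμstar : 0 < ((1 - γ) / (γ * ζ)) ^ γ * t ^ γ := by positivity
      have h1 : (((1 - γ) / (γ * ζ)) ^ γ * t ^ γ) ^ (1 - 1 / γ) * t
          = γ * lam₁ * t ^ γ := by
        apply eq_of_log_eq' (by positivity) (by positivity)
        rw [Real.log_mul (by positivity) (by positivity),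
          Real.log_rpow hμstar,
          Real.log_mul (by positivity) (by positivity),
          Real.log_rpow hDpos, Real.log_rpow ht,
          Real.log_div (by positivity) (by positivity),
          Real.log_mul (by positivity) (by positivity),
          Real.log_mul (by positivity) (by positivity),
          Real.log_rpow ht, hlogζ, Real.log_mul hγ0.ne' hlam.ne']
        field_simp
        ring
      have h2 : ζ * (((1 - γ) / (γ * ζ)) ^ γ * t ^ γ)
          = (1 - γ) * lam₁ * t ^ γ := by
        apply eq_of_log_eq' (by positivity) (by positivity)
        rw [Real.log_mul (by positivity) (by positivity),
          Real.log_mul (by positivity) (by positivity),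
          Real.log_rpow hDpos, Real.log_rpow ht,
          Real.log_div (by positivity) (by positivity),
          Real.log_mul (by positivity) (by positivity),
          Real.log_mul (by positivity) (by positivity),
          Real.log_rpow ht, hlogζ, Real.log_mul h1γ.ne' hlam.ne']
        field_simp
        ring
      rw [h1, h2]; ring
  · have h0 : lam₁ * (0 : ℝ) ^ γ = 0 := by
      rw [Real.zero_rpow (ne_of_gt hγ0), mul_zero]
    rw [h0]
    constructor
    · exact ⟨0, Set.self_mem_Ici, by simp⟩
    · rintro x ⟨μ, hμ, rfl⟩
      exact mul_nonneg (le_of_lt hζpos) hμ
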